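/- Let $M$ be an $\alpha$-balanced module lattice of rank $r$ over a number field $K$, and let $M' \subseteq M$ be a sub-module lattice of index $q$ (i.e., $|M/M'| = q$). Then $M'$ is $(\alpha \cdot q)$-balanced. -/

import Mathlib

open scoped NumberField
set_option maxHeartbeats 1000000

/-- The `j`-th successive minimum of a set `M` (w.r.t. `R`-linear independence). -/
noncomputable def succMin (R : Type*) [Semiring R] {V : Type*} [NormedAddCommGroup V]
    [Module R V] (M : Set V) (j : ℕ) : ℝ :=
  sInf {lam : ℝ | 0 < lam ∧ ∃ v : Fin j → V,
    (∀ i, v i ∈ M) ∧ LinearIndependent R v ∧ ∀ i, ‖v i‖ ≤ lam}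

/-- The feasible set whose infimum is `succMin`. -/
def succSet (R : Type*) [Semiring R] {V : Type*} [NormedAddCommGroup V]
    [Module R V] (M : Set V) (j : ℕ) : Set ℝ :=
  {lam : ℝ | 0 < lam ∧ ∃ v : Fin j → V,
    (∀ i, v i ∈ M) ∧ LinearIndependent R v ∧ ∀ i, ‖v i‖ ≤ lam}

lemma succMin_eq (R : Type*) [Semiring R] {V : Type*} [NormedAddCommGroup V]
    [Module R V] (M : Set V) (j : ℕ) : succMin R M j = sInf (succSet R M j) := rfl

lemma succSet_bddBelow (R : Type*) [Semiring R] {V : Type*} [NormedAddCommGroup V]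
    [Module R V] (M : Set V) (j : ℕ) : BddBelow (succSet R M j) :=
  ⟨0, fun _ hx => hx.1.le⟩

lemma succMin_nonneg (R : Type*) [Semiring R] {V : Type*} [NormedAddCommGroup V]
    [Module R V] (M : Set V) (j : ℕ) : 0 ≤ succMin R M j :=
  Real.sInf_nonneg (fun _ hx => hx.1.le)

lemma succSet_mono (R : Type*) [Semiring R] {V : Type*} [NormedAddCommGroup V]
    [Module R V] {M M' : Set V} (h : M' ⊆ M) (j : ℕ) :
    succSet R M' j ⊆ succSet R M j := by
  rintro lam ⟨hpos, v, hv, hli, hn⟩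
  exact ⟨hpos, v, fun i => h (hv i), hli, hn⟩

lemma succSet_anti (R : Type*) [Semiring R] {V : Type*} [NormedAddCommGroup V]
    [Module R V] (M : Set V) (j : ℕ) (h : (succSet R M (j + 1)).Nonempty) :
    (succSet R M j).Nonempty := by
  obtain ⟨lam, hpos, v, hv, hli, hn⟩ := h
  exact ⟨lam, hpos, v ∘ Fin.castSucc, fun i => hv _,
    hli.comp _ (Fin.castSucc_injective _), fun i => hn _⟩

theorem stmt2
    {K : Type*} [Field K] [NumberField K]
    {V : Type*} [NormedAddCommGroup V]
    [Module K V] [Module (𝓞 K) V] [IsScalarTower (𝓞 K) K V]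
    (r : ℕ) (hr : 0 < r)
    (M M' : Submodule (𝓞 K) V) [DiscreteTopology M]
    [Module.Free (𝓞 K) M] (hrank : Module.finrank (𝓞 K) M = r)
    (hle : M' ≤ M)
    (q : ℕ) (hq : 0 < q)
    (hidx : M'.toAddSubgroup.relIndex M.toAddSubgroup = q)
    (α : ℝ)
    (hbal : ∀ i : ℕ, 1 ≤ i → i < r →
      succMin K (M : Set V) (i + 1) ≤ α * succMin K (M : Set V) i) :
    ∀ i : ℕ, 1 ≤ i → i < r →
      succMin K (M' : Set V) (i + 1) ≤ (α * q) * succMin K (M' : Set V) i := by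
  have hq' : (0 : ℝ) < q := Nat.cast_pos.mpr hq
  -- key scaling fact: multiplying by q maps M into M'
  have hqmem : ∀ x ∈ M, q • x ∈ M' := by
    intro x hx
    have h1 : ((M'.toAddSubgroup.addSubgroupOf M.toAddSubgroup).index : ℕ) •
        (⟨x, hx⟩ : M.toAddSubgroup) ∈ M'.toAddSubgroup.addSubgroupOf M.toAddSubgroup :=
      AddSubgroup.nsmul_index_mem _ _
    rw [show (M'.toAddSubgroup.addSubgroupOf M.toAddSubgroup).index = q from hidx] at h1
    have h2 := (AddSubgroup.mem_addSubgroupOf).mp h1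
    simpa using h2
  -- scaling of the feasible sets
  have hscale : ∀ j : ℕ, ∀ lam ∈ succSet K (M : Set V) j,
      (q : ℝ) * lam ∈ succSet K (M' : Set V) j := by
    rintro j lam ⟨hpos, v, hv, hli, hn⟩
    refine ⟨by positivity, fun i => q • v i, fun i => hqmem _ (hv i), ?_, fun i => ?_⟩
    · have hcast : (fun i => q • v i) = fun i => (q : K) • v i := by
        funext i; rw [Nat.cast_smul_eq_nsmul]
      rw [hcast]
      have hqK : (q : K) ≠ 0 := Nat.cast_ne_zero.mpr hq.ne'
      have h := hli.units_smul (fun _ : Fin j => Units.mk0 (q : K) hqK)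
      have he : ((fun _ : Fin j => Units.mk0 (q : K) hqK) • v)
          = fun i : Fin j => (q : K) • v i := by
        funext i; simp [Units.smul_def]
      rwa [he] at h
    · calc ‖q • v i‖ ≤ q * ‖v i‖ := norm_nsmul_le
        _ ≤ q * lam := by exact mul_le_mul_of_nonneg_left (hn i) hq'.le
  -- succMin of M' bounded by q * succMin of M
  have hsm : ∀ j : ℕ, succMin K (M' : Set V) j ≤ q * succMin K (M : Set V) j := by
    intro j
    rcases Set.eq_empty_or_nonempty (succSet K (M : Set V) j) with he | hne
    · have he' : succSet K (M' : Set V) j = ∅ :=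
        Set.eq_empty_of_subset_empty (he ▸ succSet_mono K hle j)
      rw [succMin_eq, succMin_eq, he, he', Real.sInf_empty, mul_zero]
    · have hlb : ∀ lam ∈ succSet K (M : Set V) j,
          succMin K (M' : Set V) j / q ≤ lam := by
        intro lam hlam
        rw [div_le_iff₀ hq']
        calc succMin K (M' : Set V) j ≤ (q : ℝ) * lam :=
              csInf_le (succSet_bddBelow K _ j) (hscale j lam hlam)
          _ = lam * q := by ring
      have h := (div_le_iff₀ hq').mp (le_csInf hne hlb)
      rw [succMin_eq K (M : Set V) j]
      linarith
  intro i hi hir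
  rcases Set.eq_empty_or_nonempty (succSet K (M' : Set V) i) with he | hne
  · -- the feasible set for M' at i is empty, hence also at i+1; both sides are 0
    have he' : succSet K (M' : Set V) (i + 1) = ∅ := by
      by_contra h
      exact (he ▸ succSet_anti K (M' : Set V) i
        (Set.nonempty_iff_ne_empty.mpr h)).ne_empty rfl
    rw [succMin_eq, succMin_eq, he, he', Real.sInf_empty, mul_zero]
  · -- nonempty case: first get a positive lower bound from discreteness
    obtain ⟨ε, hε, hball⟩ : ∃ ε > 0, ∀ x : V, x ∈ M → x ≠ 0 → ε ≤ ‖x‖ := by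
      have hopen : IsOpen ({0} : Set M) := isOpen_discrete _
      obtain ⟨ε, hε, hball⟩ := Metric.isOpen_iff.mp hopen 0 rfl
      refine ⟨ε, hε, fun x hx hx0 => ?_⟩
      by_contra h
      push_neg at h
      have : (⟨x, hx⟩ : M) ∈ Metric.ball (0 : M) ε := by
        rw [Metric.mem_ball, Subtype.dist_eq]
        simpa using h
      have := hball this
      simp only [Set.mem_singleton_iff, Submodule.mk_eq_zero] at this
      exact hx0 this
    have hMne : (succSet K (M : Set V) i).Nonempty := hne.mono (succSet_mono K hle i)
    have hMi : ε ≤ succMin K (M : Set V) i := by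
      rw [succMin_eq]
      refine le_csInf hMne ?_
      rintro lam ⟨hpos, v, hv, hli, hn⟩
      have i0 : Fin i := ⟨0, hi⟩
      have hvne : v i0 ≠ 0 := hli.ne_zero i0
      exact le_trans (hball _ (hv i0) hvne) (hn i0)
    have hMipos : 0 < succMin K (M : Set V) i := lt_of_lt_of_le hε hMi
    have hα : 0 ≤ α := by
      have h1 := hbal i hi hir
      have h2 := succMin_nonneg K (M : Set V) (i + 1)
      nlinarith
    have hC : succMin K (M : Set V) i ≤ succMin K (M' : Set V) i := by
      rw [succMin_eq, succMin_eq]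
      exact csInf_le_csInf (succSet_bddBelow K _ i) hne (succSet_mono K hle i)
    have hA := hsm (i + 1)
    have hB := hbal i hi hir
    nlinarith [mul_le_mul_of_nonneg_left hB hq'.le,
      mul_le_mul_of_nonneg_left hC (mul_nonneg hα hq'.le)]
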